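/- Positivity preservation of the feedback Riccati-type recursions under assumption (H): assume Q_{t,k}, Q_{t,k}+Q̄_{t,k}, G_t, G_t+Ḡ_t are positive semidefinite and R_{t,k}, R_{t,k}+R̄_{t,k} are positive definite for all t∈𝕋, k∈𝕋_t. Then the solutions of the tilded recursions satisfy: S̃_{k,ℓ} and 𝒮̃_{k,ℓ} are positive semidefinite for all k∈𝕋 and ℓ∈𝕋_k∪{N}, and 𝕆̃_k=ℛ_{k,k}+ℬ_{k,k}′𝒮̃_{k,k+1}ℬ_{k,k}+Σ_{i,j}δ_k^{ij}(𝒟^i_{k,k})′S̃_{k,k+1}𝒟^j_{k,k} is positive definite for all k∈𝕋. In particular, since Φ̃_ℓ=−𝕆̃_ℓ†𝕃̃_ℓ, the recursion for S̃ can equivalently be written in the completed-square form S̃_{k,ℓ}=Q_{k,ℓ}+𝕃̃_ℓ′𝕆̃_ℓ†R_{k,ℓ}𝕆̃_ℓ†𝕃̃_ℓ+(A_{k,ℓ}−B_{k,ℓ}𝕆̃_ℓ†𝕃̃_ℓ)′S̃_{k,ℓ+1}(A_{k,ℓ}−B_{k,ℓ}𝕆̃_ℓ†𝕃̃_ℓ)+Σ_{i,j}δ_ℓ^{ij}(C^i_{k,ℓ}−D^i_{k,ℓ}𝕆̃_ℓ†𝕃̃_ℓ)′S̃_{k,ℓ+1}(C^j_{k,ℓ}−D^j_{k,ℓ}𝕆̃_ℓ†𝕃̃_ℓ),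 and analogously for 𝒮̃ with calligraphic coefficients. -/

import Mathlib

open MeasureTheory Matrix Finset

noncomputable section

namespace TILQ

/-- `ℝ^d`, realized as functions `Fin d → ℝ`. -/
abbrev Vec (d : ℕ) : Type := Fin d → ℝ

/-- Real `a × b` matrices. -/
abbrev Mat (a b : ℕ) : Type := Matrix (Fin a) (Fin b) ℝ

/-- The four Penrose equations: `Md` is the Moore–Penrose pseudoinverse of `M`. -/
def IsMoorePenrose {a b : ℕ} (M : Mat a b) (Md : Mat b a) : Prop :=
  M * Md * M = M ∧ Md * M * Md = Md ∧ (M * Md)ᵀ = M * Md ∧ (Md * M)ᵀ = Md * M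

/-- Iteration of a time-dependent step map (used to encode forward difference equations). -/
def iter {α : Type*} (init : α) (step : ℕ → α → α) : ℕ → α
  | 0 => init
  | (j + 1) => step j (iter init step j)

/-- All the deterministic data of the time-inconsistent mean-field LQ problem. -/
structure LQData (n m p : ℕ) : Type where
  N : ℕ
  A : ℕ → ℕ → Mat n n
  Ab : ℕ → ℕ → Mat n n
  B : ℕ → ℕ → Mat n m
  Bb : ℕ → ℕ → Mat n m
  C : Fin p → ℕ → ℕ → Mat n n
  Cb : Fin p → ℕ → ℕ → Mat n n
  D : Fin p → ℕ → ℕ → Mat n m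
  Db : Fin p → ℕ → ℕ → Mat n m
  f : ℕ → ℕ → Vec n
  d : Fin p → ℕ → ℕ → Vec n
  Q : ℕ → ℕ → Mat n n
  Qb : ℕ → ℕ → Mat n n
  R : ℕ → ℕ → Mat m m
  Rb : ℕ → ℕ → Mat m m
  G : ℕ → Mat n n
  Gb : ℕ → Mat n n
  F : ℕ → Mat n n
  q : ℕ → ℕ → Vec n
  g : ℕ → Vec n
  ρ : ℕ → ℕ → Vec m
  Δ : ℕ → Matrix (Fin p) (Fin p) ℝ

namespace LQData

variable {n m p : ℕ} (P : LQData n m p)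

/-- `𝒜 = A + Ā`. -/
def cA (t k : ℕ) : Mat n n := P.A t k + P.Ab t k
/-- `ℬ = B + B̄`. -/
def cB (t k : ℕ) : Mat n m := P.B t k + P.Bb t k
/-- `𝒞^i = C^i + C̄^i`. -/
def cC (i : Fin p) (t k : ℕ) : Mat n n := P.C i t k + P.Cb i t k
/-- `𝒟^i = D^i + D̄^i`. -/
def cD (i : Fin p) (t k : ℕ) : Mat n m := P.D i t k + P.Db i t k
/-- `𝒬 = Q + Q̄`. -/
def cQ (t k : ℕ) : Mat n n := P.Q t k + P.Qb t k
/-- `ℛ = R + R̄`. -/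
def cR (t k : ℕ) : Mat m m := P.R t k + P.Rb t k
/-- `𝒢 = G + Ḡ`. -/
def cG (t : ℕ) : Mat n n := P.G t + P.Gb t

end LQData

section Aux

/-- Conjugation preserves positive semidefiniteness (real transpose form). -/
lemma psd_conj {a b : ℕ} {S : Mat a a} (hS : S.PosSemidef) (M : Mat a b) :
    (Mᵀ * S * M).PosSemidef := by
  simpa [Matrix.conjTranspose_eq_transpose_of_trivial] using
    hS.conjTranspose_mul_mul_same M

/-- A finite sum of PSD matrices is PSD. -/
lemma psd_sum {a : ℕ} {ι : Type*} (s : Finset ι) (f : ι → Mat a a)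
    (h : ∀ i ∈ s, (f i).PosSemidef) : (∑ i ∈ s, f i).PosSemidef := by
  classical
  induction s using Finset.induction_on with
  | empty => simpa using (Matrix.PosSemidef.zero : (0 : Mat a a).PosSemidef)
  | @insert x s hx ih =>
    rw [Finset.sum_insert hx]
    exact (h x (Finset.mem_insert_self x s)).add
      (ih fun i hi => h i (Finset.mem_insert_of_mem hi))

/-- A PSD real matrix factors as `Bᴴ * B`. -/
lemma psd_factor {a : ℕ} {S : Matrix (Fin a) (Fin a) ℝ} (hS : S.PosSemidef) :
    ∃ B : Matrix (Fin a) (Fin a) ℝ, S = Bᴴ * B := by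
  open scoped MatrixOrder in
  refine ⟨CFC.sqrt S, ?_⟩
  have h1 : (CFC.sqrt S)ᴴ = CFC.sqrt S := (CFC.sqrt_nonneg S).posSemidef.isHermitian.eq
  rw [h1, CFC.sqrt_mul_sqrt_self S hS.nonneg]

/-- The mixed double sum `∑ᵢⱼ Δᵢⱼ Mᵢᵀ S Mⱼ` is PSD when `Δ` and `S` are PSD. -/
lemma psd_dsum {a b p : ℕ} {Δ : Matrix (Fin p) (Fin p) ℝ} (hΔ : Δ.PosSemidef)
    {S : Mat a a} (hS : S.PosSemidef) (M : Fin p → Mat a b) :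
    (∑ i : Fin p, ∑ j : Fin p, Δ i j • ((M i)ᵀ * S * M j)).PosSemidef := by
  classical
  obtain ⟨T, hT⟩ := psd_factor hS
  obtain ⟨E, hE⟩ := psd_factor hΔ
  have hS' : S = Tᵀ * T := by
    simpa [Matrix.conjTranspose_eq_transpose_of_trivial] using hT
  have hEntry : ∀ i j, Δ i j = ∑ c, E c i * E c j := by
    intro i j
    rw [hE]
    simp [Matrix.mul_apply, Matrix.conjTranspose_apply]
  have key : (∑ i : Fin p, ∑ j : Fin p, Δ i j • ((M i)ᵀ * S * M j))
      = ∑ c : Fin p, (∑ i : Fin p, E c i • (T * M i))ᵀ *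
          (∑ j : Fin p, E c j • (T * M j)) := by
    calc (∑ i : Fin p, ∑ j : Fin p, Δ i j • ((M i)ᵀ * S * M j))
        = ∑ i : Fin p, ∑ j : Fin p, ∑ c : Fin p,
            (E c i * E c j) • ((M i)ᵀ * S * M j) := by
          refine Finset.sum_congr rfl fun i _ => Finset.sum_congr rfl fun j _ => ?_
          rw [hEntry, Finset.sum_smul]
      _ = ∑ i : Fin p, ∑ c : Fin p, ∑ j : Fin p,
            (E c i * E c j) • ((M i)ᵀ * S * M j) := by
          exact Finset.sum_congr rfl fun i _ => Finset.sum_comm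
      _ = ∑ c : Fin p, ∑ i : Fin p, ∑ j : Fin p,
            (E c i * E c j) • ((M i)ᵀ * S * M j) := Finset.sum_comm
      _ = ∑ c : Fin p, (∑ i : Fin p, E c i • (T * M i))ᵀ *
            (∑ j : Fin p, E c j • (T * M j)) := by
          refine Finset.sum_congr rfl fun c _ => ?_
          simp only [hS', Matrix.transpose_sum, Matrix.sum_mul, Matrix.mul_sum,
            Matrix.transpose_smul, Matrix.smul_mul, Matrix.mul_smul, smul_smul,
            Matrix.transpose_mul, Matrix.mul_assoc, Finset.smul_sum]
          rw [Finset.sum_comm]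
          exact Finset.sum_congr rfl fun i _ => Finset.sum_congr rfl fun j _ => by
            rw [mul_comm]
  rw [key]
  refine psd_sum _ _ fun c _ => ?_
  simpa [Matrix.conjTranspose_eq_transpose_of_trivial] using
    Matrix.posSemidef_conjTranspose_mul_self (∑ i : Fin p, E c i • (T * M i))

end Aux

/-- Positivity preservation of the tilded (feedback) Riccati-type recursions under the
standard definiteness assumption (H), together with the completed-square form of the
recursions for `S̃` and `𝒮̃`. -/
theorem tilde_recursion_positivity {n m p : ℕ} (P : LQData n m p)
    (hQsymm : ∀ t k, (P.Q t k).IsSymm ∧ (P.Qb t k).IsSymm ∧ (P.R t k).IsSymm ∧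
      (P.Rb t k).IsSymm)
    (hGsymm : ∀ t, (P.G t).IsSymm ∧ (P.Gb t).IsSymm)
    (hΔ : ∀ k, (P.Δ k).PosSemidef)
    (hH : ∀ t k, (P.Q t k).PosSemidef ∧ (P.cQ t k).PosSemidef ∧ (P.G t).PosSemidef ∧
      (P.cG t).PosSemidef ∧ (P.R t k).PosDef ∧ (P.cR t k).PosDef)
    (St Scalt Ut : ℕ → ℕ → Mat n n) (Obb Odag : ℕ → Mat m m) (Lt Φt : ℕ → Mat m n)
    (hMP : ∀ k, k < P.N → IsMoorePenrose (Obb k) (Odag k))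
    (hterm : ∀ k, k < P.N →
      St k P.N = P.G k ∧ Scalt k P.N = P.G k + P.Gb k ∧ Ut k P.N = P.F k)
    (hObb : ∀ l, l < P.N →
      Obb l = P.cR l l + (P.cB l l)ᵀ * Scalt l (l + 1) * P.cB l l
        + ∑ i : Fin p, ∑ j : Fin p,
            P.Δ l i j • ((P.cD i l l)ᵀ * St l (l + 1) * P.cD j l l))
    (hLt : ∀ l, l < P.N →
      Lt l = (P.cB l l)ᵀ * Scalt l (l + 1) * P.cA l l
        + (∑ i : Fin p, ∑ j : Fin p,
            P.Δ l i j • ((P.cD i l l)ᵀ * St l (l + 1) * P.cC j l l))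
        + (P.cB l l)ᵀ * Ut l (l + 1))
    (hΦt : ∀ l, l < P.N → Φt l = -(Odag l * Lt l))
    (hSt : ∀ k l, k < P.N → k ≤ l → l < P.N →
      St k l = P.Q k l + (Φt l)ᵀ * P.R k l * Φt l
        + (P.A k l + P.B k l * Φt l)ᵀ * St k (l + 1) * (P.A k l + P.B k l * Φt l)
        + ∑ i : Fin p, ∑ j : Fin p,
            P.Δ l i j • ((P.C i k l + P.D i k l * Φt l)ᵀ * St k (l + 1)
              * (P.C j k l + P.D j k l * Φt l)))
    (hScalt : ∀ k l, k < P.N → k ≤ l → l < P.N →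
      Scalt k l = P.cQ k l + (Φt l)ᵀ * P.cR k l * Φt l
        + (P.cA k l + P.cB k l * Φt l)ᵀ * Scalt k (l + 1) * (P.cA k l + P.cB k l * Φt l)
        + ∑ i : Fin p, ∑ j : Fin p,
            P.Δ l i j • ((P.cC i k l + P.cD i k l * Φt l)ᵀ * St k (l + 1)
              * (P.cC j k l + P.cD j k l * Φt l)))
    (hUt : ∀ k l, k < P.N → k ≤ l → l < P.N →
      Ut k l = (P.cA k l + P.cB k l * Φt l) * Ut k (l + 1)) :
    (∀ k l, k < P.N → k ≤ l → l ≤ P.N → (St k l).PosSemidef ∧ (Scalt k l).PosSemidef) ∧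
    (∀ k, k < P.N → (Obb k).PosDef) ∧
    (∀ k l, k < P.N → k ≤ l → l < P.N →
      St k l = P.Q k l + (Lt l)ᵀ * Odag l * P.R k l * Odag l * Lt l
        + (P.A k l - P.B k l * (Odag l * Lt l))ᵀ * St k (l + 1)
            * (P.A k l - P.B k l * (Odag l * Lt l))
        + ∑ i : Fin p, ∑ j : Fin p,
            P.Δ l i j • ((P.C i k l - P.D i k l * (Odag l * Lt l))ᵀ * St k (l + 1)
              * (P.C j k l - P.D j k l * (Odag l * Lt l))) ∧
      Scalt k l = P.cQ k l + (Lt l)ᵀ * Odag l * P.cR k l * Odag l * Lt l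
        + (P.cA k l - P.cB k l * (Odag l * Lt l))ᵀ * Scalt k (l + 1)
            * (P.cA k l - P.cB k l * (Odag l * Lt l))
        + ∑ i : Fin p, ∑ j : Fin p,
            P.Δ l i j • ((P.cC i k l - P.cD i k l * (Odag l * Lt l))ᵀ * St k (l + 1)
              * (P.cC j k l - P.cD j k l * (Odag l * Lt l)))) := by
  classical
  -- Main backward induction: PSD of `St` and `Scalt`.
  have main : ∀ d l, l + d = P.N → ∀ k, k < P.N → k ≤ l →
      (St k l).PosSemidef ∧ (Scalt k l).PosSemidef := by
    intro d
    induction d with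
    | zero =>
      intro l hl k hk hkl
      have hlN : l = P.N := by omega
      subst hlN
      obtain ⟨h1, h2, _⟩ := hterm k hk
      refine ⟨?_, ?_⟩
      · rw [h1]; exact (hH k k).2.2.1
      · rw [h2]
        have := (hH k k).2.2.2.1
        simpa [LQData.cG] using this
    | succ d ih =>
      intro l hl k hk hkl
      have hlN : l < P.N := by omega
      have ihk := ih (l + 1) (by omega) k hk (by omega)
      constructor
      · rw [hSt k l hk hkl hlN]
        exact (((hH k l).1.add (psd_conj ((hH k l).2.2.2.2.1).posSemidef _)).add
            (psd_conj ihk.1 _)).add (psd_dsum (hΔ l) ihk.1 _)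
      · rw [hScalt k l hk hkl hlN]
        exact (((hH k l).2.1.add (psd_conj ((hH k l).2.2.2.2.2).posSemidef _)).add
            (psd_conj ihk.2 _)).add (psd_dsum (hΔ l) ihk.1 _)
  -- Positive definiteness of `Obb`.
  have hOpos : ∀ l, l < P.N → (Obb l).PosDef := by
    intro l hl
    have hm := main (P.N - (l + 1)) (l + 1) (by omega) l hl (by omega)
    rw [hObb l hl]
    exact ((hH l l).2.2.2.2.2.add_posSemidef (psd_conj hm.2 _)).add_posSemidef
      (psd_dsum (hΔ l) hm.1 _)
  -- `Odag l` is the inverse of `Obb l`, and is symmetric.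
  have hOdT : ∀ l, l < P.N → (Odag l)ᵀ = Odag l := by
    intro l hl
    have hd : IsUnit (Obb l).det := (hOpos l hl).det_pos.ne'.isUnit
    have h1 := (hMP l hl).1
    have hOd : Odag l = (Obb l)⁻¹ := by
      calc Odag l = ((Obb l)⁻¹ * Obb l) * Odag l * (Obb l * (Obb l)⁻¹) := by
            rw [Matrix.nonsing_inv_mul _ hd, Matrix.mul_nonsing_inv _ hd,
              Matrix.one_mul, Matrix.mul_one]
        _ = (Obb l)⁻¹ * (Obb l * Odag l * Obb l) * (Obb l)⁻¹ := by
            simp only [Matrix.mul_assoc]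
        _ = (Obb l)⁻¹ := by
            rw [h1, Matrix.nonsing_inv_mul _ hd, Matrix.one_mul]
    have hsymm : (Obb l)ᵀ = Obb l := by
      have := (hOpos l hl).isHermitian
      exact (by simpa [Matrix.conjTranspose_eq_transpose_of_trivial] using this : (Obb l).IsSymm)
    rw [hOd, Matrix.transpose_nonsing_inv, hsymm]
  refine ⟨?_, ?_, ?_⟩
  · intro k l hk hkl hlN
    exact main (P.N - l) l (by omega) k hk hkl
  · exact hOpos
  · intro k l hk hkl hlN
    have hT := hOdT l hlN
    constructor
    · rw [hSt k l hk hkl hlN, hΦt l hlN]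
      simp only [Matrix.transpose_neg, Matrix.transpose_mul, Matrix.neg_mul,
        Matrix.mul_neg, neg_neg, hT, sub_eq_add_neg, Matrix.mul_assoc]
    · rw [hScalt k l hk hkl hlN, hΦt l hlN]
      simp only [Matrix.transpose_neg, Matrix.transpose_mul, Matrix.neg_mul,
        Matrix.mul_neg, neg_neg, hT, sub_eq_add_neg, Matrix.mul_assoc]

end TILQ
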